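/- Let p_1 < p_2 < p_3 < ... be the primes in increasing order and Q_n(s) = ∏_{k=1}^n (1 − p_k^{-s})^{-1} (with Q_0(s) = 1). Then for every n ≥ 0, lim_{s→∞} (ζ(s) − Q_n(s))^{-1/s} = p_{n+1}, where s ranges over real numbers and ζ is the Riemann zeta function. -/

import Mathlib

open Filter Topology Nat

noncomputable def fhom (s : ℝ) : ℕ →* ℝ where
  toFun m := (m : ℝ) ^ (-s)
  map_one' := by simp
  map_mul' m k := by
    push_cast
    exact Real.mul_rpow (Nat.cast_nonneg m) (Nat.cast_nonneg k)

lemma summable_f {s : ℝ} (hs : 1 < s) : Summable (fun m : ℕ => (m : ℝ) ^ (-s)) :=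
  Real.summable_nat_rpow.mpr (by linarith)

lemma prod_eq (n : ℕ) {s : ℝ} (hs : 1 < s) :
    ∏ k ∈ Finset.range n, (1 - (Nat.nth Nat.Prime k : ℝ) ^ (-s))⁻¹
      = ∑' m : (Nat.nth Nat.Prime n).smoothNumbers, ((m : ℕ) : ℝ) ^ (-s) := by
  have h := EulerProduct.prod_primesBelow_geometric_eq_tsum_smoothNumbers
    (f := fhom s) (summable_f hs) (Nat.nth Nat.Prime n)
  simp only [fhom, MonoidHom.coe_mk, OneHom.coe_mk] at h
  rw [← h]
  refine Finset.prod_nbij (fun k => Nat.nth Nat.Prime k) ?_ ?_ ?_ ?_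
  · intro k hk
    exact Nat.mem_primesBelow.mpr
      ⟨(Nat.nth_lt_nth Nat.infinite_setOf_prime).mpr (Finset.mem_range.mp hk),
        Nat.prime_nth_prime k⟩
  · exact ((Nat.nth_strictMono Nat.infinite_setOf_prime).injective).injOn
  · intro p hp
    have hp' := Nat.mem_primesBelow.mp (Finset.mem_coe.mp hp)
    refine ⟨Nat.count Nat.Prime p, ?_, Nat.nth_count hp'.2⟩
    simp only [Finset.coe_range, Set.mem_Iio]
    have := hp'.1
    rw [← Nat.nth_count hp'.2] at this
    exact (Nat.nth_lt_nth Nat.infinite_setOf_prime).mp this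
  · intro p hp
    rfl

lemma zeta_eq {s : ℝ} (hs : 1 < s) :
    (∑' m : ℕ, ((m : ℝ) + 1) ^ (-s)) = ∑' m : ℕ, (m : ℝ) ^ (-s) := by
  rw [Summable.tsum_eq_zero_add (summable_f hs), Nat.cast_zero,
    Real.zero_rpow (by linarith), zero_add]
  push_cast
  rfl

lemma diff_eq (n : ℕ) {s : ℝ} (hs : 1 < s) :
    (∑' m : ℕ, ((m : ℝ) + 1) ^ (-s)) -
      ∏ k ∈ Finset.range n, (1 - (Nat.nth Nat.Prime k : ℝ) ^ (-s))⁻¹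
    = ∑' m : ↥((Nat.nth Nat.Prime n).smoothNumbers)ᶜ, ((m : ℕ) : ℝ) ^ (-s) := by
  rw [zeta_eq hs, prod_eq n hs]
  have h := Summable.tsum_subtype_add_tsum_subtype_compl (summable_f hs)
    (Nat.nth Nat.Prime n).smoothNumbers
  linarith

lemma lower (n : ℕ) {s : ℝ} (hs : 1 < s) :
    ((Nat.nth Nat.Prime n : ℝ)) ^ (-s)
      ≤ ∑' m : ↥((Nat.nth Nat.Prime n).smoothNumbers)ᶜ, ((m : ℕ) : ℝ) ^ (-s) := by
  have hsum := (summable_f hs).subtype ((Nat.nth Nat.Prime n).smoothNumbers)ᶜ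
  have hmem : Nat.nth Nat.Prime n ∈ ((Nat.nth Nat.Prime n).smoothNumbers)ᶜ := by
    intro h
    exact lt_irrefl _ (Nat.mem_smoothNumbers'.mp h _ (Nat.prime_nth_prime n) dvd_rfl)
  exact Summable.le_tsum hsum ⟨_, hmem⟩ (fun j _ => Real.rpow_nonneg (Nat.cast_nonneg _) _)

lemma ge_of_not_smooth {P m : ℕ} (hm : m ∉ P.smoothNumbers) (hm0 : m ≠ 0) : P ≤ m := by
  have h : ¬ ∀ p, p.Prime → p ∣ m → p < P := fun h => hm (Nat.mem_smoothNumbers'.mpr h)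
  push_neg at h
  obtain ⟨p, hp, hpd, hPp⟩ := h
  exact hPp.trans (Nat.le_of_dvd (Nat.pos_of_ne_zero hm0) hpd)

lemma upper (n : ℕ) {s : ℝ} (hs : 2 ≤ s) :
    ∑' m : ↥((Nat.nth Nat.Prime n).smoothNumbers)ᶜ, ((m : ℕ) : ℝ) ^ (-s)
      ≤ ((Nat.nth Nat.Prime n : ℝ) ^ 2 * ∑' m : ℕ, (m : ℝ) ^ (-2 : ℝ))
          * (Nat.nth Nat.Prime n : ℝ) ^ (-s) := by
  set P := Nat.nth Nat.Prime n with hPdef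
  have hs1 : (1 : ℝ) < s := by linarith
  have hP2 : 2 ≤ P := (Nat.prime_nth_prime n).two_le
  have hPpos : (0 : ℝ) < (P : ℝ) := by positivity
  have h2sum : Summable (fun m : ℕ => (m : ℝ) ^ (-2 : ℝ)) :=
    Real.summable_nat_rpow.mpr (by norm_num)
  have hterm : ∀ m : ↥(P.smoothNumbers)ᶜ,
      ((m : ℕ) : ℝ) ^ (-s) ≤ (P : ℝ) ^ 2 * (P : ℝ) ^ (-s) * ((m : ℕ) : ℝ) ^ (-2 : ℝ) := by
    rintro ⟨m, hm⟩
    by_cases hm0 : m = 0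
    · subst hm0
      simp [Real.zero_rpow (show -s ≠ 0 by linarith), Real.zero_rpow (show (-2:ℝ) ≠ 0 by norm_num)]
    · have hPm : (P : ℝ) ≤ (m : ℝ) := Nat.cast_le.mpr (ge_of_not_smooth hm hm0)
      have hmpos : (0 : ℝ) < (m : ℝ) := by
        have := Nat.pos_of_ne_zero hm0; positivity
      have h1 : ((m : ℕ) : ℝ) ^ (-s) = (m : ℝ) ^ (2 - s) * (m : ℝ) ^ (-2 : ℝ) := by
        rw [← Real.rpow_add hmpos]; ring_nf
      have h2 : (m : ℝ) ^ (2 - s) ≤ (P : ℝ) ^ (2 - s) :=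
        Real.rpow_le_rpow_of_nonpos hPpos hPm (by linarith)
      have h3 : (P : ℝ) ^ (2 - s) = (P : ℝ) ^ 2 * (P : ℝ) ^ (-s) := by
        rw [show (2 - s) = (2 : ℝ) + (-s) by ring, Real.rpow_add hPpos, Real.rpow_two]
      calc ((m : ℕ) : ℝ) ^ (-s) = (m : ℝ) ^ (2 - s) * (m : ℝ) ^ (-2 : ℝ) := h1
        _ ≤ (P : ℝ) ^ (2 - s) * (m : ℝ) ^ (-2 : ℝ) :=
            mul_le_mul_of_nonneg_right h2 (Real.rpow_nonneg hmpos.le _)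
        _ = (P : ℝ) ^ 2 * (P : ℝ) ^ (-s) * ((m : ℕ) : ℝ) ^ (-2 : ℝ) := by rw [h3]
  calc ∑' m : ↥(P.smoothNumbers)ᶜ, ((m : ℕ) : ℝ) ^ (-s)
      ≤ ∑' m : ↥(P.smoothNumbers)ᶜ, (P : ℝ) ^ 2 * (P : ℝ) ^ (-s) * ((m : ℕ) : ℝ) ^ (-2 : ℝ) :=
        Summable.tsum_le_tsum hterm ((summable_f hs1).subtype _)
          (((h2sum.subtype _)).mul_left _)
    _ = (P : ℝ) ^ 2 * (P : ℝ) ^ (-s)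
          * ∑' m : ↥(P.smoothNumbers)ᶜ, ((m : ℕ) : ℝ) ^ (-2 : ℝ) := tsum_mul_left
    _ ≤ (P : ℝ) ^ 2 * (P : ℝ) ^ (-s) * ∑' m : ℕ, (m : ℝ) ^ (-2 : ℝ) := by
        refine mul_le_mul_of_nonneg_left ?_ (by positivity)
        exact Summable.tsum_le_tsum_of_inj Subtype.val Subtype.val_injective
          (fun c _ => Real.rpow_nonneg (Nat.cast_nonneg _) _)
          (fun i => le_rfl) (h2sum.subtype _) h2sum
    _ = ((P : ℝ) ^ 2 * ∑' m : ℕ, (m : ℝ) ^ (-2 : ℝ)) * (P : ℝ) ^ (-s) := by ring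

/-- Golomb's recurrence formula for primes: with `Q_n(s)` the partial Euler
product over the first `n` primes, `(ζ(s) - Q_n(s))^{-1/s} → p_{n+1}`. -/
theorem golomb_recurrence (n : ℕ) :
    Tendsto (fun s : ℝ =>
        ((∑' m : ℕ, ((m : ℝ) + 1) ^ (-s)) -
          ∏ k ∈ Finset.range n, (1 - (Nat.nth Nat.Prime k : ℝ) ^ (-s))⁻¹) ^ (-1 / s))
      atTop (𝓝 (Nat.nth Nat.Prime n : ℝ)) := by
  set P := Nat.nth Nat.Prime n with hPdef
  have hP2 : 2 ≤ P := (Nat.prime_nth_prime n).two_le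
  have hPpos : (0 : ℝ) < (P : ℝ) := by positivity
  have h2sum : Summable (fun m : ℕ => (m : ℝ) ^ (-2 : ℝ)) :=
    Real.summable_nat_rpow.mpr (by norm_num)
  set Z := ∑' m : ℕ, (m : ℝ) ^ (-2 : ℝ) with hZdef
  have hZ1 : (1 : ℝ) ≤ Z := by
    have := Summable.le_tsum h2sum 1 (fun j _ => Real.rpow_nonneg (Nat.cast_nonneg _) _)
    simpa [hZdef] using this
  set C := (P : ℝ) ^ 2 * Z with hCdef
  have hP2' : (2 : ℝ) ≤ (P : ℝ) := by exact_mod_cast hP2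
  have hC1 : (1 : ℝ) ≤ C := by nlinarith
  have hCpos : (0 : ℝ) < C := by linarith
  -- limit of the lower bound
  have hexp : Tendsto (fun s : ℝ => -1 / s) atTop (𝓝 0) := by
    have h := tendsto_inv_atTop_zero (𝕜 := ℝ)
    have := h.neg
    rw [neg_zero] at this
    convert this using 2 with s
    ring
  have hCτ : Tendsto (fun s : ℝ => C ^ (-1 / s)) atTop (𝓝 1) := by
    have hcont : ContinuousAt (fun t : ℝ => C ^ t) 0 :=
      Real.continuousAt_const_rpow (ne_of_gt hCpos)
    have := hcont.tendsto.comp hexp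
    rwa [Real.rpow_zero] at this
  have hg : Tendsto (fun s : ℝ => C ^ (-1 / s) * (P : ℝ)) atTop (𝓝 (P : ℝ)) := by
    have := hCτ.mul_const (P : ℝ)
    rwa [one_mul] at this
  refine tendsto_of_tendsto_of_tendsto_of_le_of_le' hg tendsto_const_nhds ?_ ?_
  all_goals
    filter_upwards [eventually_ge_atTop (2 : ℝ)] with s hs2
  all_goals
    have hs1 : (1 : ℝ) < s := by linarith
    have hs0 : (0 : ℝ) < s := by linarith
    have hneg : -1 / s ≤ 0 := by
      apply div_nonpos_of_nonpos_of_nonneg <;> linarith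
    rw [diff_eq n hs1]
    set E := ∑' m : ↥(P.smoothNumbers)ᶜ, ((m : ℕ) : ℝ) ^ (-s) with hEdef
    have hE1 : (P : ℝ) ^ (-s) ≤ E := lower n hs1
    have hE2 : E ≤ C * (P : ℝ) ^ (-s) := upper n hs2
    have hEpos : 0 < E := lt_of_lt_of_le (Real.rpow_pos_of_pos hPpos _) hE1
    have hkey : ((P : ℝ) ^ (-s)) ^ (-1 / s) = (P : ℝ) := by
      rw [← Real.rpow_mul hPpos.le]
      rw [show (-s) * (-1 / s) = 1 by field_simp]
      exact Real.rpow_one _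
  · -- lower bound : C ^ (-1/s) * P ≤ E ^ (-1/s)
    have h := Real.rpow_le_rpow_of_nonpos hEpos hE2 hneg
    calc C ^ (-1 / s) * (P : ℝ)
        = (C * (P : ℝ) ^ (-s)) ^ (-1 / s) := by
          rw [Real.mul_rpow hCpos.le (Real.rpow_nonneg hPpos.le _), hkey]
      _ ≤ E ^ (-1 / s) := h
  · -- upper bound : E ^ (-1/s) ≤ P
    have h := Real.rpow_le_rpow_of_nonpos (Real.rpow_pos_of_pos hPpos _) hE1 hneg
    rwa [hkey] at h
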